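/- Let n0, n1 ≥ 1 be natural numbers, n := n0 + n1, and h ≥ 1. Then the number of binary sequences x in B_{n0,n1} with τ(x) = 2h satisfies h · |{x ∈ B_{n0,n1} : τ(x) = 2h}| = (n − 2h) · C(n0 − 1, h − 1) · C(n1 − 1, h − 1), where C(a,b) denotes the binomial coefficient. -/
import Mathlib

/-- The number of jumps `τ(x) = |{i ∈ [n-1] : x_i ≠ x_{i+1}}|` of a binary sequence
`x ∈ {0,1}^n`. -/
def tau {n : ℕ} (x : Fin n → Bool) : ℕ :=
  (Finset.univ.filter (fun i : Fin n =>
    ∃ h : (i : ℕ) + 1 < n, x i ≠ x ⟨(i : ℕ) + 1, h⟩)).card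

/-- `B_{n0,n1}`, the set of binary sequences of length `n0 + n1` with exactly
`n0` zeros and `n1` ones. -/
def Bseq (n0 n1 : ℕ) : Finset (Fin (n0 + n1) → Bool) :=
  Finset.univ.filter (fun x =>
    (Finset.univ.filter (fun i => x i = false)).card = n0 ∧
    (Finset.univ.filter (fun i => x i = true)).card = n1)


/-- number of boolean lists with `a` falses, `b` trues, `t` jumps, empty or head false -/
def d : ℕ → ℕ → ℕ → ℕ
  | 0, b, t => if b = 0 ∧ t = 0 then 1 else 0
  | a+1, b, t => d a b t + (if 1 ≤ b ∧ 1 ≤ t then d b a (t-1) else 0)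
termination_by a b t => a + b
decreasing_by all_goals omega

def cf (a b t : ℕ) : ℕ :=
  if a = 0 then (if b = 0 ∧ t = 0 then 1 else 0)
  else if b = 0 then (if t = 0 then 1 else 0)
  else if t % 2 = 1 then Nat.choose (a-1) (t/2) * Nat.choose (b-1) (t/2)
  else if t = 0 then 0
  else Nat.choose (a-1) (t/2) * Nat.choose (b-1) (t/2 - 1)

lemma d_eq_cf : ∀ a b t, d a b t = cf a b t
  | 0, b, t => by simp [d, cf]
  | a+1, b, t => by
    rw [d, d_eq_cf a b t,
      show (if 1 ≤ b ∧ 1 ≤ t then d b a (t-1) else 0)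
         = (if 1 ≤ b ∧ 1 ≤ t then cf b a (t-1) else 0) by
        split
        · rw [d_eq_cf b a (t-1)]
        · rfl]
    rcases Nat.eq_zero_or_pos b with rfl | hb
    · rcases Nat.eq_zero_or_pos a with rfl | ha
      · simp [cf]
      · simp [cf, (by omega : ¬ a = 0)]
    · have hb' : ¬ b = 0 := by omega
      obtain ⟨k, rfl | rfl⟩ := Nat.even_or_odd' t
      · -- t = 2k
        rcases Nat.eq_zero_or_pos k with rfl | hk
        · simp [cf, hb']
        · have ht1 : 2 * k - 1 = 2 * (k - 1) + 1 := by omega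
          rw [if_pos ⟨hb, by omega⟩, ht1]
          rcases Nat.eq_zero_or_pos a with rfl | ha
          · simp [cf, hb', (by omega : ¬ 2 * k = 0), (by omega : 2 * k / 2 = k),
              (by omega : ¬ 2 * k % 2 = 1), (by omega : (2*(k-1)+1) % 2 = 1),
              (by omega : (2*(k-1)+1) / 2 = k - 1),
              Nat.choose_eq_zero_of_lt (by omega : 0 < k)]
          · obtain ⟨A, rfl⟩ : ∃ A, a = A + 1 := ⟨a - 1, by omega⟩
            obtain ⟨K, rfl⟩ : ∃ K, k = K + 1 := ⟨k - 1, by omega⟩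
            rw [show (2*(K+1-1)+1 : ℕ) = 2*K+1 from by omega]
            simp only [cf, if_neg (by omega : ¬ A + 1 + 1 = 0), if_neg (by omega : ¬ A + 1 = 0),
              if_neg hb', if_neg (by omega : ¬ (2*(K+1)) % 2 = 1),
              if_neg (by omega : ¬ 2 * (K+1) = 0),
              (by omega : 2 * (K+1) / 2 = K + 1),
              if_pos (by omega : (2*K+1) % 2 = 1),
              (by omega : (2*K+1) / 2 = K),
              (by omega : A + 1 + 1 - 1 = A + 1), (by omega : A + 1 - 1 = A),
              (by omega : K + 1 - 1 = K)]
            rw [Nat.choose_succ_succ]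
            ring
      · -- t = 2k+1
        rw [if_pos ⟨hb, by omega⟩, (by omega : 2 * k + 1 - 1 = 2 * k)]
        rcases Nat.eq_zero_or_pos a with rfl | ha
        · rcases Nat.eq_zero_or_pos k with rfl | hk
          · simp [cf, hb']
          · simp [cf, hb', (by omega : (2*k+1) % 2 = 1), (by omega : (2*k+1) / 2 = k),
              (by omega : ¬ (2*k) % 2 = 1), (by omega : ¬ 2 * k = 0),
              (by omega : 2 * k / 2 = k),
              Nat.choose_eq_zero_of_lt (by omega : 0 < k)]
            omega
        · have ha' : ¬ a = 0 := by omega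
          rcases Nat.eq_zero_or_pos k with rfl | hk
          · simp [cf, hb', ha', Nat.choose_zero_right]
          · obtain ⟨A, rfl⟩ : ∃ A, a = A + 1 := ⟨a - 1, by omega⟩
            obtain ⟨K, rfl⟩ : ∃ K, k = K + 1 := ⟨k - 1, by omega⟩
            simp only [cf, if_neg (by omega : ¬ A + 1 + 1 = 0), if_neg (by omega : ¬ A + 1 = 0),
              if_neg hb', if_pos (by omega : (2*(K+1)+1) % 2 = 1),
              (by omega : (2*(K+1)+1) / 2 = K + 1),
              if_neg (by omega : ¬ (2*(K+1)) % 2 = 1), if_neg (by omega : ¬ 2 * (K+1) = 0),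
              (by omega : 2 * (K+1) / 2 = K + 1),
              (by omega : A + 1 + 1 - 1 = A + 1), (by omega : A + 1 - 1 = A),
              (by omega : K + 1 - 1 = K)]
            rw [Nat.choose_succ_succ]
            ring
termination_by a b t => a + b
decreasing_by all_goals omega
lemma cons_mk_succ {n : ℕ} (s : Bool) (y : Fin n → Bool) (j : ℕ) (hj : j + 1 < n + 1) :
    (Fin.cons s y : Fin (n+1) → Bool) ⟨j + 1, hj⟩ = y ⟨j, Nat.lt_of_succ_lt_succ hj⟩ := by
  have h : (⟨j + 1, hj⟩ : Fin (n+1)) = (⟨j, Nat.lt_of_succ_lt_succ hj⟩ : Fin n).succ :=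
    Fin.ext rfl
  rw [h]
  exact Fin.cons_succ (α := fun _ => Bool) s y _

lemma countF_cons {n : ℕ} (s : Bool) (y : Fin n → Bool) :
    (Finset.univ.filter (fun i => (Fin.cons s y : Fin (n+1) → Bool) i = false)).card
      = (if s = false then 1 else 0) + (Finset.univ.filter (fun i => y i = false)).card := by
  rw [Finset.card_filter, Finset.card_filter, Fin.sum_univ_succ]
  simp [Fin.cons_succ, Fin.cons_zero]

lemma countT_cons {n : ℕ} (s : Bool) (y : Fin n → Bool) :
    (Finset.univ.filter (fun i => (Fin.cons s y : Fin (n+1) → Bool) i = true)).card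
      = (if s = true then 1 else 0) + (Finset.univ.filter (fun i => y i = true)).card := by
  rw [Finset.card_filter, Finset.card_filter, Fin.sum_univ_succ]
  simp [Fin.cons_succ, Fin.cons_zero]

lemma tau_cons {n : ℕ} (s : Bool) (y : Fin n → Bool) :
    tau (Fin.cons s y : Fin (n+1) → Bool) =
      (if h : 0 < n then (if s ≠ y ⟨0, h⟩ then 1 else 0) else 0) + tau y := by
  unfold tau
  rw [Finset.card_filter, Finset.card_filter, Fin.sum_univ_succ]
  congr 1
  · -- head term
    by_cases hn : 0 < n
    · rw [dif_pos hn]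
      have hiff : (∃ h : ((0 : Fin (n+1)) : ℕ) + 1 < n + 1,
          (Fin.cons s y : Fin (n+1) → Bool) 0 ≠
            (Fin.cons s y : Fin (n+1) → Bool) ⟨((0 : Fin (n+1)) : ℕ) + 1, h⟩) ↔
          (s ≠ y ⟨0, hn⟩) := by
        simp only [Fin.val_zero]
        constructor
        · rintro ⟨h, hne⟩
          rwa [Fin.cons_zero, cons_mk_succ] at hne
        · intro hne
          refine ⟨by omega, ?_⟩
          rwa [Fin.cons_zero, cons_mk_succ]
      rw [if_congr hiff rfl rfl]
    · rw [dif_neg hn]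
      have : ¬ (((0 : Fin (n+1)) : ℕ) + 1 < n + 1) := by simp; omega
      simp only [this]
      simp
  · apply Finset.sum_congr rfl
    intro i _
    have hiff : (∃ h : ((Fin.succ i : Fin (n+1)) : ℕ) + 1 < n + 1,
        (Fin.cons s y : Fin (n+1) → Bool) i.succ ≠
          (Fin.cons s y : Fin (n+1) → Bool) ⟨((Fin.succ i : Fin (n+1)) : ℕ) + 1, h⟩) ↔
        (∃ h : (i : ℕ) + 1 < n, y i ≠ y ⟨(i : ℕ) + 1, h⟩) := by
      simp only [Fin.val_succ]
      constructor
      · rintro ⟨h, hne⟩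
        rw [Fin.cons_succ, cons_mk_succ] at hne
        exact ⟨by omega, hne⟩
      · rintro ⟨h, hne⟩
        refine ⟨by omega, ?_⟩
        rw [Fin.cons_succ, cons_mk_succ]
        exact hne
    rw [if_congr hiff rfl rfl]

/-- head-marked count -/
def cnt (n a b t : ℕ) (s : Bool) : ℕ :=
  (Finset.univ.filter (fun x : Fin n → Bool =>
    (Finset.univ.filter (fun i => x i = false)).card = a ∧
    (Finset.univ.filter (fun i => x i = true)).card = b ∧
    tau x = t ∧ ∀ i : Fin n, (i : ℕ) = 0 → x i = s)).card

lemma cnt_succ (n a b t : ℕ) (s : Bool) :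
    cnt (n+1) a b t s = (Finset.univ.filter (fun y : Fin n → Bool =>
      (Finset.univ.filter (fun i => (Fin.cons s y : Fin (n+1) → Bool) i = false)).card = a ∧
      (Finset.univ.filter (fun i => (Fin.cons s y : Fin (n+1) → Bool) i = true)).card = b ∧
      tau (Fin.cons s y : Fin (n+1) → Bool) = t)).card := by
  rw [cnt]
  apply Finset.card_bij' (fun x _ => Fin.tail x) (fun y _ => (Fin.cons s y : Fin (n+1) → Bool))
  · intro x hx
    simp only [Finset.mem_filter, Finset.mem_univ, true_and] at hx ⊢
    obtain ⟨h1, h2, h3, h4⟩ := hx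
    have hx0 : x 0 = s := h4 0 rfl
    have hcons : (Fin.cons s (Fin.tail x) : Fin (n+1) → Bool) = x := by
      rw [← hx0]; exact Fin.cons_self_tail x
    rw [hcons]
    exact ⟨h1, h2, h3⟩
  · intro y hy
    simp only [Finset.mem_filter, Finset.mem_univ, true_and] at hy ⊢
    obtain ⟨h1, h2, h3⟩ := hy
    refine ⟨h1, h2, h3, ?_⟩
    intro i hi
    have : i = 0 := Fin.ext hi
    rw [this, Fin.cons_zero]
  · intro x hx
    simp only [Finset.mem_filter, Finset.mem_univ, true_and] at hx
    have hx0 : x 0 = s := hx.2.2.2 0 rfl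
    rw [← hx0]; exact Fin.cons_self_tail x
  · intro y _
    funext i
    simp [Fin.tail, Fin.cons_succ]

lemma head_cond {n : ℕ} (hn : 0 < n) (x : Fin n → Bool) (s : Bool) :
    (∀ i : Fin n, (i : ℕ) = 0 → x i = s) ↔ x ⟨0, hn⟩ = s :=
  ⟨fun H => H ⟨0, hn⟩ rfl, fun H i hi => by
    have : i = ⟨0, hn⟩ := Fin.ext hi
    rwa [this]⟩

lemma univ_fn0 : (Finset.univ : Finset (Fin 0 → Bool)) = {fun i => i.elim0} :=
  Finset.eq_singleton_iff_unique_mem.mpr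
    ⟨Finset.mem_univ _, fun x _ => funext fun i => i.elim0⟩

lemma cnt_zero (a b t : ℕ) (s : Bool) :
    cnt 0 a b t s = if 0 = a ∧ 0 = b ∧ 0 = t then 1 else 0 := by
  rw [cnt, univ_fn0, Finset.filter_singleton, apply_ite Finset.card,
    Finset.card_singleton, Finset.card_empty]
  apply if_congr _ rfl rfl
  simp [tau]

lemma cnt_one (a b t : ℕ) (s : Bool) :
    cnt 1 a b t s = if (if s = false then 1 else 0) = a ∧ (if s = true then 1 else 0) = b ∧ 0 = t
      then 1 else 0 := by
  rw [cnt_succ, univ_fn0, Finset.filter_singleton, apply_ite Finset.card,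
    Finset.card_singleton, Finset.card_empty]
  apply if_congr _ rfl rfl
  rw [countF_cons, countT_cons, tau_cons]
  simp [tau]

lemma card_split_head {n : ℕ} (hn : 0 < n) (P : (Fin n → Bool) → Prop) [DecidablePred P] :
    (Finset.univ.filter P).card
      = (Finset.univ.filter (fun y => P y ∧ y ⟨0, hn⟩ = false)).card
        + (Finset.univ.filter (fun y => P y ∧ y ⟨0, hn⟩ = true)).card := by
  have h := Finset.card_filter_add_card_filter_not
    (s := Finset.univ.filter P) (p := fun y => y ⟨0, hn⟩ = false)
  rw [Finset.filter_filter, Finset.filter_filter] at h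
  rw [← h]
  congr 2
  apply Finset.filter_congr
  intro y _
  simp

lemma cnt_a0_false (n b t : ℕ) : cnt (n+1) 0 b t false = 0 := by
  rw [cnt_succ]
  rw [Finset.card_eq_zero, Finset.filter_eq_empty_iff]
  intro y _
  rw [countF_cons]
  simp

lemma cnt_b0_true (n a t : ℕ) : cnt (n+1) a 0 t true = 0 := by
  rw [cnt_succ]
  rw [Finset.card_eq_zero, Finset.filter_eq_empty_iff]
  intro y _
  rw [countT_cons]
  simp

lemma cnt_step_false (n a b t : ℕ) (hn : 0 < n) :
    cnt (n+1) (a+1) b t false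
      = cnt n a b t false + (if 1 ≤ t then cnt n a b (t-1) true else 0) := by
  rw [cnt_succ]
  simp only [countF_cons, countT_cons, tau_cons, dif_pos hn, reduceIte,
    Bool.false_eq_true, Bool.true_eq_false, if_false, zero_add]
  rw [card_split_head hn]
  congr 1
  · rw [cnt]
    apply congrArg
    apply Finset.filter_congr
    intro y _
    constructor
    · rintro ⟨⟨hf, ht', hta⟩, hy0⟩
      rw [hy0] at hta
      simp at hta
      exact ⟨by omega, ht', by omega, (head_cond hn y false).mpr hy0⟩
    · rintro ⟨hf, ht', hta, hhead⟩
      have hy0 := (head_cond hn y false).mp hhead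
      refine ⟨⟨by omega, ht', ?_⟩, hy0⟩
      rw [hy0]
      simp
      omega
  · by_cases ht : 1 ≤ t
    · rw [if_pos ht, cnt]
      apply congrArg
      apply Finset.filter_congr
      intro y _
      constructor
      · rintro ⟨⟨hf, ht', hta⟩, hy0⟩
        rw [hy0] at hta
        simp at hta
        exact ⟨by omega, ht', by omega, (head_cond hn y true).mpr hy0⟩
      · rintro ⟨hf, ht', hta, hhead⟩
        have hy0 := (head_cond hn y true).mp hhead
        refine ⟨⟨by omega, ht', ?_⟩, hy0⟩
        rw [hy0]
        simp
        omega
    · rw [if_neg ht, Finset.card_eq_zero, Finset.filter_eq_empty_iff]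
      intro y _
      rintro ⟨⟨hf, ht', hta⟩, hy0⟩
      rw [hy0] at hta
      simp at hta
      omega

lemma cnt_step_true (n a b t : ℕ) (hn : 0 < n) :
    cnt (n+1) a (b+1) t true
      = cnt n a b t true + (if 1 ≤ t then cnt n a b (t-1) false else 0) := by
  rw [cnt_succ]
  simp only [countF_cons, countT_cons, tau_cons, dif_pos hn, reduceIte,
    Bool.false_eq_true, Bool.true_eq_false, if_false, zero_add]
  rw [card_split_head hn]
  rw [add_comm ((Finset.univ.filter _).card)]
  congr 1
  · rw [cnt]
    apply congrArg
    apply Finset.filter_congr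
    intro y _
    constructor
    · rintro ⟨⟨hf, ht', hta⟩, hy0⟩
      rw [hy0] at hta
      simp at hta
      exact ⟨hf, by omega, by omega, (head_cond hn y true).mpr hy0⟩
    · rintro ⟨hf, ht', hta, hhead⟩
      have hy0 := (head_cond hn y true).mp hhead
      refine ⟨⟨hf, by omega, ?_⟩, hy0⟩
      rw [hy0]
      simp
      omega
  · by_cases ht : 1 ≤ t
    · rw [if_pos ht, cnt]
      apply congrArg
      apply Finset.filter_congr
      intro y _
      constructor
      · rintro ⟨⟨hf, ht', hta⟩, hy0⟩
        rw [hy0] at hta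
        simp at hta
        exact ⟨hf, by omega, by omega, (head_cond hn y false).mpr hy0⟩
      · rintro ⟨hf, ht', hta, hhead⟩
        have hy0 := (head_cond hn y false).mp hhead
        refine ⟨⟨hf, by omega, ?_⟩, hy0⟩
        rw [hy0]
        simp
        omega
    · rw [if_neg ht, Finset.card_eq_zero, Finset.filter_eq_empty_iff]
      intro y _
      rintro ⟨⟨hf, ht', hta⟩, hy0⟩
      rw [hy0] at hta
      simp at hta
      omega

lemma cnt_eq (n : ℕ) : ∀ a b t, (cnt n a b t false = if n = a + b then d a b t else 0) ∧
    (cnt n a b t true = if n = a + b then d b a t else 0) := by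
  induction n with
  | zero =>
    intro a b t
    rw [cnt_zero, cnt_zero]
    constructor <;>
    · by_cases h0 : a = 0 ∧ b = 0
      · obtain ⟨rfl, rfl⟩ := h0
        simp [d, eq_comm]
      · rw [if_neg (by omega), if_neg (by omega)]
  | succ n IH =>
    intro a b t
    rcases Nat.eq_zero_or_pos n with rfl | hn
    · rw [cnt_one, cnt_one]
      simp only [reduceIte, Bool.false_eq_true, Bool.true_eq_false, if_false]
      constructor
      · by_cases hc : a = 1 ∧ b = 0
        · obtain ⟨rfl, rfl⟩ := hc
          simp [d, eq_comm]
        · rw [if_neg (by omega)]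
          split
          · rename_i hab
            have hab' : a = 0 ∧ b = 1 := by omega
            obtain ⟨rfl, rfl⟩ := hab'
            simp [d]
          · rfl
      · by_cases hc : a = 0 ∧ b = 1
        · obtain ⟨rfl, rfl⟩ := hc
          simp [d, eq_comm]
        · rw [if_neg (by omega)]
          split
          · rename_i hab
            have hab' : a = 1 ∧ b = 0 := by omega
            obtain ⟨rfl, rfl⟩ := hab'
            simp [d]
          · rfl
    · constructor
      · rcases Nat.eq_zero_or_pos a with rfl | ha
        · rw [cnt_a0_false]
          split
          · rename_i hab
            have hb1 : ¬ (b = 0 ∧ t = 0) := by omega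
            simp [d, hb1]
          · rfl
        · obtain ⟨a', rfl⟩ : ∃ a', a = a' + 1 := ⟨a - 1, by omega⟩
          rw [cnt_step_false n a' b t hn, (IH a' b t).1,
            show (if 1 ≤ t then cnt n a' b (t-1) true else 0)
               = (if 1 ≤ t then (if n = a' + b then d b a' (t-1) else 0) else 0) by
              rw [(IH a' b (t-1)).2]]
          by_cases hnab : n = a' + b
          · subst hnab
            rw [if_pos rfl, if_pos rfl,
              if_pos (show a' + b + 1 = a' + 1 + b by omega),
              show d (a' + 1) b t = d a' b t + (if 1 ≤ b ∧ 1 ≤ t then d b a' (t-1) else 0)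
                from by rw [d]]
            by_cases hb : 1 ≤ b
            · by_cases ht : 1 ≤ t
              · rw [if_pos ht, if_pos ⟨hb, ht⟩]
              · rw [if_neg ht, if_neg (fun hc => ht hc.2)]
            · have hb0 : b = 0 := by omega
              subst hb0
              have hd0 : d 0 a' (t-1) = 0 := by
                have : ¬ (a' = 0 ∧ t - 1 = 0) := by omega
                simp [d, this]
              rw [hd0]
              simp
          · rw [if_neg hnab, if_neg hnab,
              if_neg (show ¬ (n + 1 = a' + 1 + b) by omega)]
            simp
      · rcases Nat.eq_zero_or_pos b with rfl | hb
        · rw [cnt_b0_true]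
          split
          · rename_i hab
            have ha1 : ¬ (a = 0 ∧ t = 0) := by omega
            simp [d, ha1]
          · rfl
        · obtain ⟨b', rfl⟩ : ∃ b', b = b' + 1 := ⟨b - 1, by omega⟩
          rw [cnt_step_true n a b' t hn, (IH a b' t).2,
            show (if 1 ≤ t then cnt n a b' (t-1) false else 0)
               = (if 1 ≤ t then (if n = a + b' then d a b' (t-1) else 0) else 0) by
              rw [(IH a b' (t-1)).1]]
          by_cases hnab : n = a + b'
          · subst hnab
            rw [if_pos rfl, if_pos rfl,
              if_pos (show a + b' + 1 = a + (b' + 1) by omega),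
              show d (b' + 1) a t = d b' a t + (if 1 ≤ a ∧ 1 ≤ t then d a b' (t-1) else 0)
                from by rw [d]]
            by_cases ha : 1 ≤ a
            · by_cases ht : 1 ≤ t
              · rw [if_pos ht, if_pos ⟨ha, ht⟩]
              · rw [if_neg ht, if_neg (fun hc => ht hc.2)]
            · have ha0 : a = 0 := by omega
              subst ha0
              have hd0 : d 0 b' (t-1) = 0 := by
                have : ¬ (b' = 0 ∧ t - 1 = 0) := by omega
                simp [d, this]
              rw [hd0]
              simp
          · rw [if_neg hnab, if_neg hnab,
              if_neg (show ¬ (n + 1 = a + (b' + 1)) by omega)]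
            simp


lemma card_glue (n0 n1 t : ℕ) (hpos : 0 < n0 + n1) :
    ((Bseq n0 n1).filter (fun x => tau x = t)).card
      = cnt (n0+n1) n0 n1 t false + cnt (n0+n1) n0 n1 t true := by
  rw [Bseq, Finset.filter_filter, card_split_head hpos]
  congr 1
  · rw [cnt]
    apply congrArg
    apply Finset.filter_congr
    intro y _
    constructor
    · rintro ⟨⟨⟨h1, h2⟩, h3⟩, h4⟩
      exact ⟨h1, h2, h3, (head_cond hpos y false).mpr h4⟩
    · rintro ⟨h1, h2, h3, h4⟩
      exact ⟨⟨⟨h1, h2⟩, h3⟩, (head_cond hpos y false).mp h4⟩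
  · rw [cnt]
    apply congrArg
    apply Finset.filter_congr
    intro y _
    constructor
    · rintro ⟨⟨⟨h1, h2⟩, h3⟩, h4⟩
      exact ⟨h1, h2, h3, (head_cond hpos y true).mpr h4⟩
    · rintro ⟨h1, h2, h3, h4⟩
      exact ⟨⟨⟨h1, h2⟩, h3⟩, (head_cond hpos y true).mp h4⟩

theorem stmt_3 (n0 n1 h : ℕ) (h0 : 1 ≤ n0) (h1 : 1 ≤ n1) (hh : 1 ≤ h) :
    h * ((Bseq n0 n1).filter (fun x => tau x = 2 * h)).card =
      ((n0 + n1) - 2 * h) * Nat.choose (n0 - 1) (h - 1) * Nat.choose (n1 - 1) (h - 1) := by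
  have hpos : 0 < n0 + n1 := by omega
  have hcf0 : cf n0 n1 (2*h) = Nat.choose (n0-1) h * Nat.choose (n1-1) (h-1) := by
    rw [cf, if_neg (by omega : ¬ n0 = 0), if_neg (by omega : ¬ n1 = 0),
      if_neg (by omega : ¬ (2*h) % 2 = 1), if_neg (by omega : ¬ 2*h = 0),
      (by omega : 2*h/2 = h)]
  have hcf1 : cf n1 n0 (2*h) = Nat.choose (n1-1) h * Nat.choose (n0-1) (h-1) := by
    rw [cf, if_neg (by omega : ¬ n1 = 0), if_neg (by omega : ¬ n0 = 0),
      if_neg (by omega : ¬ (2*h) % 2 = 1), if_neg (by omega : ¬ 2*h = 0),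
      (by omega : 2*h/2 = h)]
  rw [card_glue n0 n1 (2*h) hpos, (cnt_eq (n0+n1) n0 n1 (2*h)).1,
    (cnt_eq (n0+n1) n0 n1 (2*h)).2, if_pos rfl, if_pos rfl,
    d_eq_cf n0 n1 (2*h), d_eq_cf n1 n0 (2*h), hcf0, hcf1]
  have e0 : h * Nat.choose (n0-1) h = Nat.choose (n0-1) (h-1) * (n0 - h) := by
    have := Nat.choose_succ_right_eq (n0-1) (h-1)
    rw [(by omega : h - 1 + 1 = h)] at this
    rw [mul_comm]
    rw [this, (by omega : n0 - 1 - (h-1) = n0 - h)]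
  have e1 : h * Nat.choose (n1-1) h = Nat.choose (n1-1) (h-1) * (n1 - h) := by
    have := Nat.choose_succ_right_eq (n1-1) (h-1)
    rw [(by omega : h - 1 + 1 = h)] at this
    rw [mul_comm]
    rw [this, (by omega : n1 - 1 - (h-1) = n1 - h)]
  by_cases hc0 : h ≤ n0
  · by_cases hc1 : h ≤ n1
    · rw [Nat.mul_add,
        show h * (Nat.choose (n0-1) h * Nat.choose (n1-1) (h-1))
           = (h * Nat.choose (n0-1) h) * Nat.choose (n1-1) (h-1) by ring, e0,
        show h * (Nat.choose (n1-1) h * Nat.choose (n0-1) (h-1))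
           = (h * Nat.choose (n1-1) h) * Nat.choose (n0-1) (h-1) by ring, e1,
        (by omega : n0 + n1 - 2*h = (n0 - h) + (n1 - h))]
      ring
    · have z1 : Nat.choose (n1-1) (h-1) = 0 := Nat.choose_eq_zero_of_lt (by omega)
      have z2 : Nat.choose (n1-1) h = 0 := Nat.choose_eq_zero_of_lt (by omega)
      rw [z1, z2]
      ring
  · have z1 : Nat.choose (n0-1) (h-1) = 0 := Nat.choose_eq_zero_of_lt (by omega)
    have z2 : Nat.choose (n0-1) h = 0 := Nat.choose_eq_zero_of_lt (by omega)
    rw [z1, z2]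
    ring
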